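/- Let I ⊆ ℝ be an open interval, a₂, a₁, a₀ : ℝ → ℝ functions, and y : ℝ → ℝ differentiable on I with y'(x) = a₂(x)·y(x)^2 + a₁(x)·y(x) + a₀(x) on I. Let α, β, γ, δ : ℝ → ℝ be differentiable on I with α(x)δ(x) - β(x)γ(x) = 1 and γ(x)·y(x) + δ(x) ≠ 0 for all x ∈ I. Then ȳ = (α·y + β)/(γ·y + δ) is differentiable on I and satisfies ȳ' = ā₂·ȳ² + ā₁·ȳ + ā₀ on I, where ā₂ = δ²a₂ - δγa₁ + γ²a₀ + γδ' - δγ', ā₁ = -2βδa₂ + (αδ + βγ)a₁ - 2αγa₀ + δα' - αδ' + βγ' - γβ', and ā₀ = β²a₂ - αβa₁ + α²a₀ + αβ' - βα'. -/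

import Mathlib

/-- **Transformation of a Riccati equation under a pointwise Möbius action
by an SL(2,ℝ)-valued curve.** If `y` solves
`y' = a₂ y² + a₁ y + a₀` on the open interval `I`, and `α, β, γ, δ` are
differentiable on `I` with `αδ - βγ = 1` and `γ y + δ ≠ 0` on `I`, then
`ȳ = (α y + β)/(γ y + δ)` is differentiable on `I` and solves
`ȳ' = ā₂ ȳ² + ā₁ ȳ + ā₀` with the transformed coefficients
`ā₂ = δ²a₂ - δγa₁ + γ²a₀ + γδ' - δγ'`,
`ā₁ = -2βδa₂ + (αδ + βγ)a₁ - 2αγa₀ + δα' - αδ' + βγ' - γβ'`,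
`ā₀ = β²a₂ - αβa₁ + α²a₀ + αβ' - βα'`. -/
theorem riccati_moebius_transformation
    (I : Set ℝ) (hI : IsOpen I)
    (a₂ a₁ a₀ : ℝ → ℝ)
    (y y' : ℝ → ℝ)
    (hy : ∀ x ∈ I, HasDerivAt y (y' x) x)
    (hR : ∀ x ∈ I, y' x = a₂ x * (y x) ^ 2 + a₁ x * y x + a₀ x)
    (α β γ δ α' β' γ' δ' : ℝ → ℝ)
    (hα : ∀ x ∈ I, HasDerivAt α (α' x) x)
    (hβ : ∀ x ∈ I, HasDerivAt β (β' x) x)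
    (hγ : ∀ x ∈ I, HasDerivAt γ (γ' x) x)
    (hδ : ∀ x ∈ I, HasDerivAt δ (δ' x) x)
    (hdet : ∀ x ∈ I, α x * δ x - β x * γ x = 1)
    (hden : ∀ x ∈ I, γ x * y x + δ x ≠ 0) :
    ∀ x ∈ I,
      HasDerivAt (fun t => (α t * y t + β t) / (γ t * y t + δ t))
        (((δ x) ^ 2 * a₂ x - δ x * γ x * a₁ x + (γ x) ^ 2 * a₀ x
            + γ x * δ' x - δ x * γ' x)
              * ((α x * y x + β x) / (γ x * y x + δ x)) ^ 2
          + (-2 * β x * δ x * a₂ x + (α x * δ x + β x * γ x) * a₁ x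
              - 2 * α x * γ x * a₀ x
              + δ x * α' x - α x * δ' x + β x * γ' x - γ x * β' x)
              * ((α x * y x + β x) / (γ x * y x + δ x))
          + ((β x) ^ 2 * a₂ x - α x * β x * a₁ x + (α x) ^ 2 * a₀ x
              + α x * β' x - β x * α' x)) x := by
  intro x hx
  have hnum : HasDerivAt (fun t => α t * y t + β t)
      (α' x * y x + α x * y' x + β' x) x :=
    ((hα x hx).mul (hy x hx)).add (hβ x hx)
  have hdenD : HasDerivAt (fun t => γ t * y t + δ t)
      (γ' x * y x + γ x * y' x + δ' x) x :=
    ((hγ x hx).mul (hy x hx)).add (hδ x hx)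
  have h0 := hden x hx
  have h := hnum.div hdenD h0
  have hd := hdet x hx
  have key : ((δ x) ^ 2 * a₂ x - δ x * γ x * a₁ x + (γ x) ^ 2 * a₀ x
        + γ x * δ' x - δ x * γ' x) * (α x * y x + β x) ^ 2
      + (-2 * β x * δ x * a₂ x + (α x * δ x + β x * γ x) * a₁ x
          - 2 * α x * γ x * a₀ x
          + δ x * α' x - α x * δ' x + β x * γ' x - γ x * β' x)
          * (α x * y x + β x) * (γ x * y x + δ x)
      + ((β x) ^ 2 * a₂ x - α x * β x * a₁ x + (α x) ^ 2 * a₀ x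
          + α x * β' x - β x * α' x) * (γ x * y x + δ x) ^ 2
      = (α' x * y x + α x * y' x + β' x) * (γ x * y x + δ x)
        - (α x * y x + β x) * (γ' x * y x + γ x * y' x + δ' x) := by
    rw [hR x hx]
    linear_combination (δ x * β' x - β x * δ' x + y x * δ x * α' x
      + y x * γ x * β' x - y x * β x * γ' x - y x * α x * δ' x
      + y x ^ 2 * γ x * α' x - y x ^ 2 * α x * γ' x
      - a₀ x * β x * γ x + a₀ x * α x * δ x
      - a₁ x * y x * β x * γ x + a₁ x * y x * α x * δ x
      - a₂ x * y x ^ 2 * β x * γ x + a₂ x * y x ^ 2 * α x * δ x) * hd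
  refine HasDerivAt.congr_deriv h ?_
  rw [← key]
  field_simp
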